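/- For every permutation β, the set of properties {Av(δ) : δ ≤ β} is query-complete, where Av(δ) denotes the set of all permutations that avoid δ. -/
import Mathlib


/-- A permutation of length `n`. -/
abbrev Perm (n : ℕ) := Equiv.Perm (Fin n)

/-- `σ` is contained in `π`: there is a strictly increasing sequence of indices of `π`
on which `π` is order isomorphic to `σ`. -/
def Contains {m n : ℕ} (σ : Perm m) (π : Perm n) : Prop :=
  ∃ f : Fin m → Fin n, StrictMono f ∧ ∀ s t : Fin m, π (f s) < π (f t) ↔ σ s < σ t

/-- `π` is the inflation `σ[α 0, …, α (m-1)]` of `σ` by the nonempty permutations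
`α i` (of lengths `k i ≥ 1`): `π` has length `∑ i, k i` and its value at position
`(∑_{t < i} k t) + j` equals `(∑_{t : σ t < σ i} k t) + α i j`. -/
def IsInflation {N m : ℕ} {k : Fin m → ℕ} (σ : Perm m) (α : ∀ i, Perm (k i))
    (π : Perm N) : Prop :=
  (∀ i, 0 < k i) ∧ N = ∑ i, k i ∧
    ∀ (i : Fin m) (j : Fin (k i)) (p : Fin N),
      (p : ℕ) = (∑ t ∈ Finset.univ.filter fun t => t < i, k t) + (j : ℕ) →
      (π p : ℕ) = (∑ t ∈ Finset.univ.filter fun t => σ t < σ i, k t) + (α i j : ℕ)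

/-- A set of properties (a property is a set of permutations) is query-complete:
whether an inflation `σ[α 0, …, α (m-1)]` satisfies a property `P` of the set depends
only on `σ` and on which properties of the set each block `α i` satisfies. -/
def QueryComplete (Ps : Set (∀ n, Set (Perm n))) : Prop :=
  ∀ ⦃m : ℕ⦄ (σ : Perm m) (k k' : Fin m → ℕ)
    (α : ∀ i, Perm (k i)) (α' : ∀ i, Perm (k' i)),
    (∀ i : Fin m, ∀ Q ∈ Ps, α i ∈ Q (k i) ↔ α' i ∈ Q (k' i)) →
    ∀ P ∈ Ps, ∀ ⦃N N' : ℕ⦄ (π : Perm N) (π' : Perm N'),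
      IsInflation σ α π → IsInflation σ α' π' → (π ∈ P N ↔ π' ∈ P N')

private lemma contains_trans {a b c : ℕ} {x : Perm a} {y : Perm b} {z : Perm c}
    (h1 : Contains x y) (h2 : Contains y z) : Contains x z := by
  obtain ⟨f, hf, pf⟩ := h1
  obtain ⟨g, hg, pg⟩ := h2
  exact ⟨g ∘ f, hg.comp hf, fun s t => (pg _ _).trans (pf s t)⟩

private lemma pos_lt_sum {m : ℕ} (k : Fin m → ℕ) (i : Fin m) (j : ℕ) (hj : j < k i) :
    (∑ t ∈ Finset.univ.filter (fun t => t < i), k t) + j < ∑ t, k t := by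
  have h1 : (∑ t ∈ insert i (Finset.univ.filter (fun t => t < i)), k t) ≤ ∑ t, k t :=
    Finset.sum_le_sum_of_subset (Finset.subset_univ _)
  rw [Finset.sum_insert (by simp)] at h1
  omega

private lemma sum_add_le {m : ℕ} (k : Fin m → ℕ) (g : Fin m → Fin m) {i i' : Fin m}
    (h : g i < g i') :
    (∑ t ∈ Finset.univ.filter (fun t => g t < g i), k t) + k i ≤
      ∑ t ∈ Finset.univ.filter (fun t => g t < g i'), k t := by
  have hsub : insert i (Finset.univ.filter (fun t => g t < g i)) ⊆
      Finset.univ.filter (fun t => g t < g i') := by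
    intro x hx
    simp only [Finset.mem_insert, Finset.mem_filter, Finset.mem_univ, true_and] at *
    rcases hx with rfl | hx
    · exact h
    · exact hx.trans h
  have h2 := Finset.sum_le_sum_of_subset (f := k) hsub
  rw [Finset.sum_insert (by simp)] at h2
  omega

private lemma block_lt {m : ℕ} (k : Fin m → ℕ) (g : Fin m → Fin m)
    (hg : Function.Injective g)
    {i i' : Fin m} {j j' : ℕ} (hj : j < k i) (hj' : j' < k i') :
    (∑ t ∈ Finset.univ.filter (fun t => g t < g i), k t) + j <
      (∑ t ∈ Finset.univ.filter (fun t => g t < g i'), k t) + j' ↔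
      g i < g i' ∨ (i = i' ∧ j < j') := by
  constructor
  · intro hlt
    rcases lt_trichotomy (g i) (g i') with h | h | h
    · exact Or.inl h
    · refine Or.inr ⟨hg h, ?_⟩
      have := hg h
      subst this
      omega
    · exact absurd hlt (by have := sum_add_le k g h; omega)
  · rintro (h | ⟨rfl, h⟩)
    · have := sum_add_le k g h; omega
    · omega

private lemma block_lt_pos {m : ℕ} (k : Fin m → ℕ) {i i' : Fin m} {j j' : ℕ}
    (hj : j < k i) (hj' : j' < k i') :
    (∑ t ∈ Finset.univ.filter (fun t => t < i), k t) + j <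
      (∑ t ∈ Finset.univ.filter (fun t => t < i'), k t) + j' ↔
      i < i' ∨ (i = i' ∧ j < j') := by
  simpa using block_lt k id Function.injective_id hj hj'

private lemma exists_decomp {m : ℕ} (k : Fin m → ℕ) (p : ℕ) (hp : p < ∑ i, k i) :
    ∃ (i : Fin m) (j : ℕ), j < k i ∧
      p = (∑ t ∈ Finset.univ.filter (fun t => t < i), k t) + j := by
  let F : (Σ i : Fin m, Fin (k i)) → Fin (∑ i, k i) := fun x =>
    ⟨(∑ t ∈ Finset.univ.filter (fun t => t < x.1), k t) + (x.2 : ℕ),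
      pos_lt_sum k x.1 x.2 x.2.isLt⟩
  have hinj : Function.Injective F := by
    rintro ⟨i, j⟩ ⟨i', j'⟩ h
    have hv : (∑ t ∈ Finset.univ.filter (fun t => t < i), k t) + (j : ℕ) =
        (∑ t ∈ Finset.univ.filter (fun t => t < i'), k t) + (j' : ℕ) :=
      congrArg Fin.val h
    obtain rfl : i = i' := by
      rcases lt_trichotomy i i' with hi | hi | hi
      · exact absurd ((block_lt_pos k j.isLt j'.isLt).mpr (Or.inl hi)) (by omega)
      · exact hi
      · exact absurd ((block_lt_pos k j'.isLt j.isLt).mpr (Or.inl hi)) (by omega)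
    have : (j : ℕ) = j' := by omega
    exact Sigma.ext rfl (heq_of_eq (Fin.ext this))
  have hbij : Function.Bijective F :=
    (Fintype.bijective_iff_injective_and_card F).mpr ⟨hinj, by simp⟩
  obtain ⟨⟨i, j⟩, hF⟩ := hbij.2 ⟨p, hp⟩
  exact ⟨i, j, j.isLt, (congrArg Fin.val hF).symm⟩

private lemma castPermVal {m : ℕ} {k : Fin m → ℕ} (α : ∀ i, Perm (k i)) {i0 i1 : Fin m}
    (h : i1 = i0) (x : ℕ) (hx : x < k i1) (hx' : x < k i0) :
    ((α i1 ⟨x, hx⟩ : Fin (k i1)) : ℕ) = ((α i0 ⟨x, hx'⟩ : Fin (k i0)) : ℕ) := by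
  subst h; rfl
private lemma transfer {b m : ℕ} (β : Perm b) (σ : Perm m) (k k' : Fin m → ℕ)
    (α : ∀ i, Perm (k i)) (α' : ∀ i, Perm (k' i))
    (H : ∀ (i : Fin m) (d' : ℕ) (δ' : Perm d'), Contains δ' β →
      Contains δ' (α i) → Contains δ' (α' i))
    {N N' : ℕ} (π : Perm N) (π' : Perm N')
    (h1 : IsInflation σ α π) (h2 : IsInflation σ α' π')
    {d : ℕ} (δ : Perm d) (hδ : Contains δ β) (hc : Contains δ π) : Contains δ π' := by
  obtain ⟨hk, hN, hπ⟩ := h1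
  obtain ⟨hk', hN', hπ'⟩ := h2
  obtain ⟨f0, hf0, hp0⟩ := hc
  have hdec : ∀ s : Fin d, ∃ (i : Fin m) (j : ℕ), j < k i ∧
      ((f0 s : ℕ)) = (∑ t ∈ Finset.univ.filter (fun t => t < i), k t) + j :=
    fun s => exists_decomp k (f0 s) (hN ▸ (f0 s).isLt)
  choose bi bj hbj hfeq using hdec
  have hval : ∀ s, (π (f0 s) : ℕ) =
      (∑ t ∈ Finset.univ.filter (fun t => σ t < σ (bi s)), k t) +
        ((α (bi s) ⟨bj s, hbj s⟩ : Fin (k (bi s))) : ℕ) :=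
    fun s => hπ (bi s) ⟨bj s, hbj s⟩ (f0 s) (hfeq s)
  have hblock : ∀ s t : Fin d, s < t → bi s < bi t ∨ (bi s = bi t ∧ bj s < bj t) := by
    intro s t hst
    have h := hf0 hst
    have h2 : (f0 s : ℕ) < f0 t := h
    rw [hfeq s, hfeq t] at h2
    exact (block_lt_pos k (hbj s) (hbj t)).mp h2
  have hvcmp : ∀ s t : Fin d, σ (bi s) < σ (bi t) → δ s < δ t := by
    intro s t h
    rw [← hp0 s t]
    have hlt : (π (f0 s) : ℕ) < π (f0 t) := by
      rw [hval s, hval t]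
      exact (block_lt k (⇑σ) σ.injective (α _ _).isLt (α _ _).isLt).mpr (Or.inl h)
    exact hlt
  have hsame : ∀ s t : Fin d, bi s = bi t →
      (((α (bi s) ⟨bj s, hbj s⟩ : Fin (k (bi s))) : ℕ) <
        ((α (bi t) ⟨bj t, hbj t⟩ : Fin (k (bi t))) : ℕ) ↔ δ s < δ t) := by
    intro s t hst
    have hsum : (∑ t' ∈ Finset.univ.filter (fun t' => σ t' < σ (bi s)), k t')
        = ∑ t' ∈ Finset.univ.filter (fun t' => σ t' < σ (bi t)), k t' := by rw [hst]
    have key : (((α (bi s) ⟨bj s, hbj s⟩ : Fin (k (bi s))) : ℕ) <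
        ((α (bi t) ⟨bj t, hbj t⟩ : Fin (k (bi t))) : ℕ)) ↔
        (π (f0 s) : ℕ) < (π (f0 t) : ℕ) := by
      rw [hval s, hval t]; omega
    rw [key, ← hp0 s t]
    exact Iff.rfl
  set T : Fin m → Finset (Fin d) := fun i0 => Finset.univ.filter (fun s => bi s = i0)
    with hT
  have hmemT : ∀ s : Fin d, s ∈ T (bi s) := by intro s; simp [hT]
  have hmemT' : ∀ (i0 : Fin m) (s : Fin d), s ∈ T i0 ↔ bi s = i0 := by
    intro i0 s; simp [hT]
  have perblock : ∀ i0 : Fin m, ∃ g : {x // x ∈ T i0} → Fin (k' i0),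
      (∀ u v : {x // x ∈ T i0}, (u : Fin d) < (v : Fin d) → g u < g v) ∧
      (∀ u v : {x // x ∈ T i0}, α' i0 (g u) < α' i0 (g v) ↔ δ u < δ v) := by
    intro i0
    have hc : (T i0).card = (T i0).card := rfl
    set c := (T i0).card with hcc
    have e1 : Fin c ≃o {x // x ∈ T i0} := (T i0).orderIsoOfFin hcc.symm
    set U := (T i0).image (fun s => δ s) with hU
    have hUcard : U.card = c := by
      rw [hU, Finset.card_image_of_injective _ δ.injective, hcc]
    have e2 : Fin c ≃o {x // x ∈ U} := U.orderIsoOfFin hUcard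
    have hmemU : ∀ r : Fin c, δ (e1 r : Fin d) ∈ U := fun r =>
      Finset.mem_image_of_mem _ (e1 r).2
    have hδfinj : Function.Injective
        (fun r : Fin c => e2.symm ⟨δ (e1 r : Fin d), hmemU r⟩) := by
      intro r r' h
      have h1 := e2.symm.injective h
      have h2 : δ (e1 r : Fin d) = δ (e1 r' : Fin d) := congrArg Subtype.val h1
      have h3 : (e1 r : Fin d) = e1 r' := δ.injective h2
      exact e1.injective (Subtype.ext h3)
    set δ' : Perm c :=
      Equiv.ofBijective _ (Finite.injective_iff_bijective.mp hδfinj) with hδ'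
    have hδ'lt : ∀ r r' : Fin c,
        δ' r < δ' r' ↔ δ (e1 r : Fin d) < δ (e1 r' : Fin d) := by
      intro r r'
      show e2.symm ⟨δ (e1 r : Fin d), hmemU r⟩ < e2.symm ⟨δ (e1 r' : Fin d), hmemU r'⟩ ↔ _
      rw [e2.symm.lt_iff_lt, Subtype.mk_lt_mk]
    have hδ'δ : Contains δ' δ := by
      refine ⟨fun r => (e1 r : Fin d), ?_, ?_⟩
      · intro r r' h
        exact Subtype.coe_lt_coe.mpr (e1.strictMono h)
      · intro r r'
        exact (hδ'lt r r').symm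
    have hjin : ∀ r : Fin c, bj (e1 r : Fin d) < k i0 := by
      intro r
      have h := (hmemT' i0 (e1 r : Fin d)).mp (e1 r).2
      have h2 := hbj (e1 r : Fin d)
      have h3 : k (bi (e1 r : Fin d)) = k i0 := by rw [h]
      omega
    have hδ'α : Contains δ' (α i0) := by
      refine ⟨fun r => ⟨bj (e1 r : Fin d), hjin r⟩, ?_, ?_⟩
      · intro r r' h
        have h1 : (e1 r : Fin d) < e1 r' := Subtype.coe_lt_coe.mpr (e1.strictMono h)
        have h2 : bi (e1 r : Fin d) = bi (e1 r' : Fin d) := by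
          rw [(hmemT' i0 _).mp (e1 r).2, (hmemT' i0 _).mp (e1 r').2]
        rcases hblock _ _ h1 with h3 | h3
        · rw [h2] at h3; exact absurd h3 (lt_irrefl _)
        · exact Fin.mk_lt_mk.mpr h3.2
      · intro r r'
        set u := (e1 r : Fin d) with hu'
        set v := (e1 r' : Fin d) with hv'
        have hu : bi u = i0 := (hmemT' i0 u).mp (e1 r).2
        have hv : bi v = i0 := (hmemT' i0 v).mp (e1 r').2
        have key := hsame u v (by rw [hu, hv])
        rw [hδ'lt r r', ← key, Fin.lt_def,
          castPermVal α hu (bj u) (hbj u) (hjin r),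
          castPermVal α hv (bj v) (hbj v) (hjin r')]
    have hδ'β : Contains δ' β := contains_trans hδ'δ hδ
    obtain ⟨f2, hf2, hp2⟩ := H i0 c δ' hδ'β hδ'α
    refine ⟨fun u => f2 (e1.symm u), ?_, ?_⟩
    · intro u v huv
      exact hf2 (e1.symm.strictMono (Subtype.coe_lt_coe.mp huv))
    · intro u v
      rw [hp2, hδ'lt, e1.apply_symm_apply, e1.apply_symm_apply]
  choose g hg1 hg2 using perblock
  have hgcast : ∀ (u : Fin d) (i0 : Fin m) (h : bi u = i0) (hu : u ∈ T i0),
      ((g (bi u) ⟨u, hmemT u⟩ : Fin (k' (bi u))) : ℕ) =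
        ((g i0 ⟨u, hu⟩ : Fin (k' i0)) : ℕ) := by
    intro u i0 h hu
    subst h
    rfl
  have hgacast : ∀ (u : Fin d) (i0 : Fin m) (h : bi u = i0) (hu : u ∈ T i0),
      ((α' (bi u) (g (bi u) ⟨u, hmemT u⟩) : Fin (k' (bi u))) : ℕ) =
        ((α' i0 (g i0 ⟨u, hu⟩) : Fin (k' i0)) : ℕ) := by
    intro u i0 h hu
    subst h
    rfl
  have hltN' : ∀ s : Fin d, (∑ t ∈ Finset.univ.filter (fun t => t < bi s), k' t) +
      ((g (bi s) ⟨s, hmemT s⟩ : Fin (k' (bi s))) : ℕ) < N' := by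
    intro s; rw [hN']; exact pos_lt_sum k' _ _ (g _ _).isLt
  have hval' : ∀ s : Fin d,
      (π' ⟨(∑ t ∈ Finset.univ.filter (fun t => t < bi s), k' t) +
        ((g (bi s) ⟨s, hmemT s⟩ : Fin (k' (bi s))) : ℕ), hltN' s⟩ : ℕ) =
      (∑ t ∈ Finset.univ.filter (fun t => σ t < σ (bi s)), k' t) +
        ((α' (bi s) (g (bi s) ⟨s, hmemT s⟩) : Fin (k' (bi s))) : ℕ) :=
    fun s => hπ' (bi s) (g (bi s) ⟨s, hmemT s⟩) _ rfl
  refine ⟨fun s =>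
    ⟨(∑ t ∈ Finset.univ.filter (fun t => t < bi s), k' t) +
      ((g (bi s) ⟨s, hmemT s⟩ : Fin (k' (bi s))) : ℕ), hltN' s⟩, ?_, ?_⟩
  · intro s t hst
    rw [Fin.mk_lt_mk]
    rcases hblock s t hst with h | ⟨hbi, hjlt⟩
    · exact (block_lt_pos k' (g _ _).isLt (g _ _).isLt).mpr (Or.inl h)
    · have ht' : t ∈ T (bi s) := (hmemT' _ _).mpr hbi.symm
      have h1 : ((g (bi s) ⟨s, hmemT s⟩ : Fin (k' (bi s))) : ℕ) <
          ((g (bi s) ⟨t, ht'⟩ : Fin (k' (bi s))) : ℕ) :=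
        hg1 (bi s) ⟨s, hmemT s⟩ ⟨t, ht'⟩ hst
      have h2 := hgcast t (bi s) hbi.symm ht'
      have h3 : (∑ t' ∈ Finset.univ.filter (fun t' => t' < bi s), k' t') =
          ∑ t' ∈ Finset.univ.filter (fun t' => t' < bi t), k' t' := by rw [hbi]
      omega
  · intro s t
    rw [Fin.lt_def, hval' s, hval' t]
    rcases lt_trichotomy (σ (bi s)) (σ (bi t)) with h | h | h
    · have hd : δ s < δ t := hvcmp s t h
      have hlt := (block_lt k' (⇑σ) σ.injective
        (α' (bi s) (g (bi s) ⟨s, hmemT s⟩)).isLt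
        (α' (bi t) (g (bi t) ⟨t, hmemT t⟩)).isLt).mpr (Or.inl h)
      exact iff_of_true hlt hd
    · have hbi : bi s = bi t := σ.injective h
      have ht' : t ∈ T (bi s) := (hmemT' _ _).mpr hbi.symm
      have h2 := hgacast t (bi s) hbi.symm ht'
      have hsum : (∑ t' ∈ Finset.univ.filter (fun t' => σ t' < σ (bi s)), k' t') =
          ∑ t' ∈ Finset.univ.filter (fun t' => σ t' < σ (bi t)), k' t' := by rw [hbi]
      have key : α' (bi s) (g (bi s) ⟨s, hmemT s⟩) < α' (bi s) (g (bi s) ⟨t, ht'⟩) ↔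
          δ s < δ t := hg2 (bi s) ⟨s, hmemT s⟩ ⟨t, ht'⟩
      rw [Fin.lt_def] at key
      constructor
      · intro hlt; exact key.mp (by omega)
      · intro hd; have := key.mpr hd; omega
    · have hd : δ t < δ s := hvcmp t s h
      have hlt := (block_lt k' (⇑σ) σ.injective
        (α' (bi t) (g (bi t) ⟨t, hmemT t⟩)).isLt
        (α' (bi s) (g (bi s) ⟨s, hmemT s⟩)).isLt).mpr (Or.inl h)
      exact iff_of_false (by omega) hd.asymm

/-- For every permutation `β`, the set of properties `{Av(δ) : δ ≤ β}` is
query-complete. -/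
theorem statement12 (b : ℕ) (β : Perm b) :
    QueryComplete {Q | ∃ (d : ℕ) (δ : Perm d), Contains δ β ∧
      Q = fun n => {π : Perm n | ¬ Contains δ π}} := by
  intro m σ k k' α α' hQ P hP N N' π π' h1 h2
  obtain ⟨d, δ, hδβ, rfl⟩ := hP
  have H : ∀ (i : Fin m) (d' : ℕ) (δ' : Perm d'), Contains δ' β →
      (Contains δ' (α i) ↔ Contains δ' (α' i)) := by
    intro i d' δ' hδ'
    have h := hQ i (fun n => {π : Perm n | ¬ Contains δ' π}) ⟨d', δ', hδ', rfl⟩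
    exact not_iff_not.mp h
  show (¬ Contains δ π) ↔ ¬ Contains δ π'
  exact not_congr
    ⟨fun hc => transfer β σ k k' α α'
        (fun i d' δ' h hcc => (H i d' δ' h).mp hcc) π π' h1 h2 δ hδβ hc,
      fun hc => transfer β σ k' k α' α
        (fun i d' δ' h hcc => (H i d' δ' h).mpr hcc) π' π h2 h1 δ hδβ hc⟩
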